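/- Let c₁, …, c_n and K be positive integers with max{c_i : i ∈ [n]} < K < c₁ + … + c_n. Let T be a star with center vertex x and leaves y₁, …, y_{n+1}, and let w : V(T) → ℕ be given by w(x) = 1, w(y_i) = c_i for i ∈ [n], and w(y_{n+1}) = K + 1. Then cs(T,w) = K + 1 if and only if there is a subset I of {1, …, n} with Σ_{i∈I} c_i = K. -/

import Mathlib

/-- Total weight of a set of vertices. -/
noncomputable def setWeight {V : Type*} (w : V → ℕ) (A : Set V) : ℕ := ∑ᶠ u ∈ A, w u

/-- `C` is the vertex set of a connected component of the subgraph of `G` induced by `S`. -/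
def IsCompOf {V : Type*} (G : SimpleGraph V) (S C : Set V) : Prop :=
  C ⊆ S ∧ (G.induce C).Connected ∧ ∀ u ∈ C, ∀ v ∈ S, G.Adj u v → v ∈ C

/-- `S` is a (nonempty) `w`-safe set of `G`. -/
def IsSafeSet {V : Type*} (G : SimpleGraph V) (w : V → ℕ) (S : Set V) : Prop :=
  S.Nonempty ∧ ∀ C D : Set V, IsCompOf G S C → IsCompOf G Sᶜ D →
    (∃ u ∈ C, ∃ v ∈ D, G.Adj u v) → setWeight w D ≤ setWeight w C

/-- The star with center `none` and leaves `some i` for `i : Fin m`. -/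
def starGraph (m : ℕ) : SimpleGraph (Option (Fin m)) where
  Adj a b := (a = none ∧ b ≠ none) ∨ (b = none ∧ a ≠ none)
  symm := ⟨by intro a b h; tauto⟩
  loopless := ⟨by rintro a (⟨h1, h2⟩ | ⟨h1, h2⟩) <;> exact h2 h1⟩

/-- The weight function on the star: the center gets weight `1`, the first `n` leaves get
weights `c 0, …, c (n-1)`, and the last leaf gets weight `K + 1`. -/
def starW (n : ℕ) (c : Fin n → ℕ) (K : ℕ) : Option (Fin (n + 1)) → ℕ
  | none => 1
  | some i => if h : (i : ℕ) < n then c ⟨i, h⟩ else K + 1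

/-- The connected safe number `cs(G,w)`. -/
noncomputable def connSafeNum {V : Type*} (G : SimpleGraph V) (w : V → ℕ) : ℕ :=
  sInf {m | ∃ S : Set V, IsSafeSet G w S ∧ (G.induce S).Connected ∧ setWeight w S = m}

open Finset

lemma setWeight_coe {V : Type*} (w : V → ℕ) (s : Finset V) :
    setWeight w ↑s = ∑ u ∈ s, w u := by
  rw [setWeight, finsum_mem_coe_finset]

lemma setWeight_singleton {V : Type*} (w : V → ℕ) (a : V) :
    setWeight w {a} = w a := by simp [setWeight]

lemma setWeight_eq {V : Type*} (w : V → ℕ) (A : Set V) (hA : A.Finite) :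
    setWeight w A = ∑ u ∈ hA.toFinset, w u :=
  finsum_mem_eq_finite_toFinset_sum w hA

lemma setWeight_mono {V : Type*} [Fintype V] (w : V → ℕ) {A B : Set V} (h : A ⊆ B) :
    setWeight w A ≤ setWeight w B := by
  rw [setWeight_eq w A (Set.toFinite A), setWeight_eq w B (Set.toFinite B)]
  exact Finset.sum_le_sum_of_subset (by simpa using h)

lemma star_adj {m : ℕ} {a b : Option (Fin m)} :
    (starGraph m).Adj a b ↔ (a = none ∧ b ≠ none) ∨ (b = none ∧ a ≠ none) := Iff.rfl

lemma induce_adj' {V : Type*} (G : SimpleGraph V) (S : Set V) (u v : ↥S) :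
    (G.induce S).Adj u v ↔ G.Adj u.1 v.1 := by simp

lemma star_connected {m : ℕ} (S : Set (Option (Fin m))) (h : none ∈ S) :
    ((starGraph m).induce S).Connected := by
  haveI : Nonempty ↥S := ⟨⟨none, h⟩⟩
  refine ⟨fun u v => ?_⟩
  have key : ∀ u : ↥S, ((starGraph m).induce S).Reachable u ⟨none, h⟩ := by
    intro u
    by_cases hu : u.1 = none
    · exact (Subtype.ext hu : u = ⟨none, h⟩) ▸ SimpleGraph.Reachable.refl _
    · exact SimpleGraph.Adj.reachable (by rw [induce_adj']; exact Or.inr ⟨rfl, hu⟩)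
  exact (key u).trans (key v).symm

lemma induce_leaf_bot {m : ℕ} {S : Set (Option (Fin m))} (h : none ∉ S) :
    (starGraph m).induce S = ⊥ := by
  ext u v
  rw [induce_adj', SimpleGraph.bot_adj, iff_false]
  rintro (⟨h1, _⟩ | ⟨h1, _⟩)
  · exact h (h1 ▸ u.2)
  · exact h (h1 ▸ v.2)

lemma leafset_subsingleton {m : ℕ} {S : Set (Option (Fin m))} (h : none ∉ S)
    (hc : ((starGraph m).induce S).Connected) : ∀ a ∈ S, ∀ b ∈ S, a = b := by
  intro a ha b hb
  have := hc.preconnected ⟨a, ha⟩ ⟨b, hb⟩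
  rw [induce_leaf_bot h, SimpleGraph.reachable_bot] at this
  exact congrArg Subtype.val this

/-- Any component of a set containing the center is the whole set. -/
lemma comp_of_center {m : ℕ} {S C : Set (Option (Fin m))} (hS : none ∈ S)
    (hC : IsCompOf (starGraph m) S C) : C = S := by
  obtain ⟨hsub, hconn, hclosed⟩ := hC
  obtain ⟨⟨u, hu⟩⟩ := hconn.nonempty
  have hnone : none ∈ C := by
    by_cases h : u = none
    · exact h ▸ hu
    · exact hclosed u hu none hS (Or.inr ⟨rfl, h⟩)
  refine hsub.antisymm (fun v hv => ?_)
  by_cases h : v = none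
  · exact h ▸ hnone
  · exact hclosed none hnone v hv (Or.inl ⟨rfl, h⟩)

/-- Any component of a set not containing the center is a singleton. -/
lemma comp_of_leaves {m : ℕ} {T D : Set (Option (Fin m))} (hT : none ∉ T)
    (hD : IsCompOf (starGraph m) T D) : ∃ j : Fin m, D = {some j} := by
  obtain ⟨hsub, hconn, _⟩ := hD
  obtain ⟨⟨u, hu⟩⟩ := hconn.nonempty
  have hu' : u ∈ T := hsub hu
  have hnone : none ∉ D := fun h => hT (hsub h)
  obtain ⟨j, rfl⟩ : ∃ j, u = some j := by
    cases u with
    | none => exact absurd hu hnone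
    | some j => exact ⟨j, rfl⟩
  refine ⟨j, Set.eq_singleton_iff_unique_mem.mpr ⟨hu, fun v hv => ?_⟩⟩
  exact leafset_subsingleton hnone hconn v hv _ hu

lemma singleton_connected {V : Type*} (G : SimpleGraph V) (a : V) :
    (G.induce {a}).Connected := by
  haveI : Nonempty ↥({a} : Set V) := ⟨⟨a, rfl⟩⟩
  refine ⟨fun u v => ?_⟩
  have : u = v := Subtype.ext (u.2.trans v.2.symm)
  exact this ▸ SimpleGraph.Reachable.refl _

section Star

variable (n : ℕ) (c : Fin n → ℕ) (K : ℕ)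

lemma starW_castSucc (i : Fin n) : starW n c K (some i.castSucc) = c i := by
  have h : ((i.castSucc : Fin (n+1)) : ℕ) < n := by simpa using i.isLt
  show (if h : ((i.castSucc : Fin (n+1)) : ℕ) < n then c ⟨_, h⟩ else K + 1) = c i
  rw [dif_pos h]
  exact congrArg c (Fin.ext rfl)

lemma starW_last : starW n c K (some (Fin.last n)) = K + 1 := by
  show (if h : ((Fin.last n : Fin (n+1)) : ℕ) < n then c ⟨_, h⟩ else K + 1) = K + 1
  rw [dif_neg (by simp)]

lemma starW_le (hmax : ∀ i, c i < K) (j : Fin (n+1)) : starW n c K (some j) ≤ K + 1 := by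
  show (if h : ((j : Fin (n+1)) : ℕ) < n then c ⟨_, h⟩ else K + 1) ≤ K + 1
  split
  · exact le_of_lt (lt_trans (hmax _) (Nat.lt_succ_self K))
  · exact le_rfl

lemma sum_leaf_weights (I : Finset (Fin n)) :
    ∑ u ∈ insert none (I.image (fun i => some (i.castSucc))), starW n c K u
      = 1 + ∑ i ∈ I, c i := by
  rw [Finset.sum_insert (by simp)]
  have : ∑ u ∈ I.image (fun i => some (i.castSucc)), starW n c K u = ∑ i ∈ I, c i := by
    rw [Finset.sum_image (fun a _ b _ h => by
      simpa [Fin.castSucc_inj] using h)]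
    exact Finset.sum_congr rfl fun i _ => starW_castSucc n c K i
  rw [this]
  rfl

lemma safe_of_center (hmax : ∀ i, c i < K) {S : Set (Option (Fin (n+1)))} (hS : none ∈ S)
    (hw : K + 1 ≤ setWeight (starW n c K) S) :
    IsSafeSet (starGraph (n+1)) (starW n c K) S := by
  refine ⟨⟨none, hS⟩, fun C D hC hD _ => ?_⟩
  rw [comp_of_center hS hC]
  obtain ⟨j, rfl⟩ := comp_of_leaves (fun h => (Set.mem_compl_iff _ _).1 h hS) hD
  rw [setWeight_singleton]
  exact le_trans (starW_le n c K hmax j) hw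

lemma lower_bound (hmax : ∀ i, c i < K) (hsum : K < ∑ i, c i)
    {S : Set (Option (Fin (n+1)))}
    (hsafe : IsSafeSet (starGraph (n+1)) (starW n c K) S)
    (hconn : ((starGraph (n+1)).induce S).Connected) :
    K + 1 ≤ setWeight (starW n c K) S ∧
      (setWeight (starW n c K) S = K + 1 → ∃ I : Finset (Fin n), ∑ i ∈ I, c i = K) := by
  classical
  set w := starW n c K with hw
  have hSCompS : IsCompOf (starGraph (n+1)) S S :=
    ⟨subset_rfl, hconn, fun _ _ v hv _ => hv⟩
  by_cases hnone : none ∈ S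
  · by_cases hlast : some (Fin.last n) ∈ S
    · -- weight ≥ K + 2
      have hsub : ↑({none, some (Fin.last n)} : Finset (Option (Fin (n+1)))) ⊆ S := by
        intro u hu
        simp only [Finset.coe_insert, Set.mem_insert_iff, Finset.coe_singleton,
          Set.mem_singleton_iff] at hu
        rcases hu with rfl | rfl <;> assumption
      have hmono := setWeight_mono w hsub
      rw [setWeight_coe, Finset.sum_pair (by simp)] at hmono
      have h1 : w none = 1 := rfl
      have h2 : w (some (Fin.last n)) = K + 1 := starW_last n c K
      rw [h1, h2] at hmono
      exact ⟨by omega, fun h => by omega⟩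
    · -- D = {some last} is a component of Sᶜ
      have hD : IsCompOf (starGraph (n+1)) Sᶜ {some (Fin.last n)} := by
        refine ⟨Set.singleton_subset_iff.2 hlast, singleton_connected _ _, ?_⟩
        rintro u rfl v hv hadj
        rcases hadj with ⟨h1, _⟩ | ⟨h1, _⟩
        · exact absurd h1 (by simp)
        · exact absurd (h1 ▸ hv) (fun h => (Set.mem_compl_iff _ _).1 h hnone)
      have hKle := hsafe.2 S {some (Fin.last n)} hSCompS hD
        ⟨none, hnone, some (Fin.last n), rfl, Or.inl ⟨rfl, by simp⟩⟩
      rw [setWeight_singleton] at hKle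
      rw [show w (some (Fin.last n)) = K + 1 from starW_last n c K] at hKle
      refine ⟨hKle, fun heq => ?_⟩
      set I : Finset (Fin n) := Finset.univ.filter (fun i => some i.castSucc ∈ S) with hI
      have hSeq : S = ↑(insert none (I.image (fun i => some (i.castSucc)))) := by
        ext u
        simp only [Finset.coe_insert, Set.mem_insert_iff, Finset.coe_image, Set.mem_image,
          Finset.mem_coe, Finset.mem_filter, Finset.mem_univ, true_and, hI]
        constructor
        · intro hu
          cases u with
          | none => exact Or.inl rfl
          | some j =>
            refine Or.inr ?_
            have hj : (j : ℕ) < n := by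
              rcases Nat.lt_or_ge (j : ℕ) n with h | h
              · exact h
              · have : j = Fin.last n :=
                  Fin.ext (le_antisymm (Nat.lt_succ_iff.1 j.isLt) h)
                rw [this] at hu
                exact absurd hu hlast
            have hcast : (⟨(j : ℕ), hj⟩ : Fin n).castSucc = j := Fin.ext rfl
            exact ⟨⟨(j : ℕ), hj⟩, by rw [hcast]; exact hu, by rw [hcast]⟩
        · rintro (rfl | ⟨i, hi, rfl⟩)
          · exact hnone
          · exact hi
      rw [hSeq, setWeight_coe, sum_leaf_weights] at heq
      exact ⟨I, by omega⟩
  · -- no center in S : contradiction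
    exfalso
    obtain ⟨a, ha⟩ := hsafe.1
    have hSsing : S = {a} := Set.eq_singleton_iff_unique_mem.mpr
      ⟨ha, fun v hv => leafset_subsingleton hnone hconn v hv a ha⟩
    obtain ⟨j, rfl⟩ : ∃ j, a = some j := by
      cases a with
      | none => exact absurd ha hnone
      | some j => exact ⟨j, rfl⟩
    have hnc : none ∈ Sᶜ := hnone
    have hccomp : IsCompOf (starGraph (n+1)) Sᶜ Sᶜ :=
      ⟨subset_rfl, star_connected _ hnc, fun _ _ v hv _ => hv⟩
    have hle := hsafe.2 S Sᶜ hSCompS hccomp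
      ⟨some j, ha, none, hnc, Or.inr ⟨rfl, by simp⟩⟩
    rw [hSsing, setWeight_singleton] at hle
    by_cases hj : (j : ℕ) < n
    · -- Sᶜ contains none and some last, weight ≥ K + 2 > c _
      have hsub : ↑({none, some (Fin.last n)} : Finset (Option (Fin (n+1)))) ⊆ Sᶜ := by
        intro u hu
        simp only [Finset.coe_insert, Set.mem_insert_iff, Finset.coe_singleton,
          Set.mem_singleton_iff] at hu
        rw [hSsing]
        rcases hu with rfl | rfl
        · simp
        · simp only [Set.mem_compl_iff, Set.mem_singleton_iff, Option.some_inj]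
          intro hEq
          rw [← hEq] at hj
          simp [Fin.last] at hj
      have hmono := setWeight_mono w hsub
      rw [setWeight_coe, Finset.sum_pair (by simp)] at hmono
      have h1 : w none = 1 := rfl
      have h2 : w (some (Fin.last n)) = K + 1 := starW_last n c K
      have h3 : w (some j) = c ⟨(j : ℕ), hj⟩ := by
        show (if h : ((j : Fin (n+1)) : ℕ) < n then c ⟨_, h⟩ else K + 1) = _
        rw [dif_pos hj]
      rw [h1, h2] at hmono
      rw [hSsing] at hmono
      rw [h3] at hle
      have := hmax ⟨(j : ℕ), hj⟩
      omega
    · -- j = last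
      have hjl : j = Fin.last n := Fin.ext (le_antisymm (Nat.lt_succ_iff.1 j.isLt) (le_of_not_gt hj))
      have hsub : ↑(insert none ((Finset.univ : Finset (Fin n)).image
          (fun i => some (i.castSucc)))) ⊆ Sᶜ := by
        intro u hu
        simp only [Finset.coe_insert, Set.mem_insert_iff, Finset.coe_image, Set.mem_image,
          Finset.mem_coe, Finset.mem_univ, true_and] at hu
        rw [hSsing]
        rcases hu with rfl | ⟨i, _, rfl⟩
        · simp
        · simp only [Set.mem_compl_iff, Set.mem_singleton_iff, Option.some_inj]
          intro hEq
          have : ((i.castSucc : Fin (n+1)) : ℕ) = (j : ℕ) := by rw [hEq]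
          rw [hjl] at this
          simp [Fin.last] at this
          omega
      have hmono := setWeight_mono w hsub
      rw [setWeight_coe, sum_leaf_weights] at hmono
      rw [hSsing] at hmono
      have h3 : w (some j) = K + 1 := hjl ▸ starW_last n c K
      rw [h3] at hle
      omega

theorem connSafeNum_star_eq_iff_subsetSum (n : ℕ) (c : Fin n → ℕ) (K : ℕ)
    (hc : ∀ i, 0 < c i) (hK : 0 < K) (hmax : ∀ i, c i < K) (hsum : K < ∑ i, c i) :
    connSafeNum (starGraph (n + 1)) (starW n c K) = K + 1 ↔
      ∃ I : Finset (Fin n), ∑ i ∈ I, c i = K := by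
  classical
  have hS0w : setWeight (starW n c K)
      ↑({none, some (Fin.last n)} : Finset (Option (Fin (n+1)))) = K + 2 := by
    rw [setWeight_coe, Finset.sum_pair (by simp),
      show starW n c K none = 1 from rfl, starW_last]
    omega
  have hne : {m | ∃ S, IsSafeSet (starGraph (n+1)) (starW n c K) S ∧
      ((starGraph (n+1)).induce S).Connected ∧ setWeight (starW n c K) S = m}.Nonempty := by
    refine ⟨K + 2, ↑({none, some (Fin.last n)} : Finset (Option (Fin (n+1)))), ?_, ?_, hS0w⟩
    · exact safe_of_center n c K hmax (by simp) (by rw [hS0w]; omega)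
    · exact star_connected _ (by simp)
  rw [connSafeNum]
  constructor
  · intro h
    have hmem := Nat.sInf_mem hne
    rw [h] at hmem
    obtain ⟨S, hsafe, hconn, hwS⟩ := hmem
    exact (lower_bound n c K hmax hsum hsafe hconn).2 hwS
  · rintro ⟨I, hI⟩
    have hwI : setWeight (starW n c K)
        ↑(insert none (I.image (fun i => some (i.castSucc)))) = K + 1 := by
      rw [setWeight_coe, sum_leaf_weights, hI]
      omega
    have hmem : K + 1 ∈ {m | ∃ S, IsSafeSet (starGraph (n+1)) (starW n c K) S ∧
        ((starGraph (n+1)).induce S).Connected ∧ setWeight (starW n c K) S = m} :=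
      ⟨_, safe_of_center n c K hmax (by simp) (le_of_eq hwI.symm),
        star_connected _ (by simp), hwI⟩
    refine le_antisymm (Nat.sInf_le hmem) ?_
    have hmem2 := Nat.sInf_mem hne
    obtain ⟨S, hsafe, hconn, hwS⟩ := hmem2
    calc K + 1 ≤ setWeight (starW n c K) S := (lower_bound n c K hmax hsum hsafe hconn).1
    _ = _ := hwS
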